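/- Let X be a Helly graph such that every strictly increasing chain of round cliques of X has length at most N (with N ≥ 1). Let G be a group acting on X by graph automorphisms, let x₀ be a vertex of X, let S ⊆ G be a finite set, and let K > 0 satisfy d(x₀, s · x₀) ≤ K for every s ∈ S ∪ S⁻¹. Suppose g ∈ G is not elliptic (its orbits in X are unbounded). Then for every n ≥ 1 and every expression g^n = s₁ s₂ ⋯ s_m with each s_i ∈ S ∪ S⁻¹, one has m ≥ n/(2NK); that is, g is uniformly undistorted with respect to the word metric. -/

import Mathlib

namespace HellyPaper

variable {V : Type*}

/-- The combinatorial ball of radius `r` around `x` in the graph `G`. -/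
def ball (G : SimpleGraph V) (x : V) (r : ℕ) : Set V := {y | G.dist x y ≤ r}

/-- A Helly graph: a connected graph in which every family of pairwise
intersecting combinatorial balls has nonempty global intersection. -/
def IsHellyGraph (G : SimpleGraph V) : Prop :=
  G.Connected ∧ ∀ S : Set (V × ℕ),
    (∀ p ∈ S, ∀ q ∈ S, (ball G p.1 p.2 ∩ ball G q.1 q.2).Nonempty) →
    (⋂ p ∈ S, ball G p.1 p.2).Nonempty

/-- A round clique: a nonempty clique which is an intersection of a family of
combinatorial balls. -/
def IsRoundClique (G : SimpleGraph V) (σ : Set V) : Prop :=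
  σ.Nonempty ∧ G.IsClique σ ∧ ∃ S : Set (V × ℕ), σ = ⋂ p ∈ S, ball G p.1 p.2

/-- Every strictly increasing chain of round cliques σ₀ ⊊ σ₁ ⊊ ⋯ ⊊ σ_k has k ≤ N
(combinatorial dimension at most N, following Corollary C of the paper). -/
def DimAtMost (G : SimpleGraph V) (N : ℕ) : Prop :=
  ∀ (k : ℕ) (c : Fin (k + 1) → Set V),
    (∀ i, IsRoundClique G (c i)) → StrictMono c → k ≤ N

/-- The injective hull of `G`, realized as the set of extremal functions. -/
def InjHull (G : SimpleGraph V) : Set (V → ℝ) :=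
  {f | (∀ x y : V, (G.dist x y : ℝ) ≤ f x + f y) ∧
    ∀ x : V, IsLUB (Set.range fun y => (G.dist x y : ℝ) - f y) (f x)}

/-- The sup metric d∞ on the injective hull. -/
noncomputable def supDist (f g : V → ℝ) : ℝ := ⨆ x, |f x - g x|

/-- The isometric action of a graph automorphism on the injective hull:
(g·f)(x) = f(g⁻¹·x). -/
def hullAct (g : Equiv.Perm V) (f : V → ℝ) : V → ℝ := fun x => f (g⁻¹ x)

/-- A permutation of the vertices is a graph automorphism if it preserves adjacency. -/
def IsGraphAut (G : SimpleGraph V) (g : Equiv.Perm V) : Prop :=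
  ∀ x y, G.Adj (g x) (g y) ↔ G.Adj x y

/-- The round clique associated to a point of the injective hull:
φ(p) = ⋂_{x ∈ X} B(x, ⌈p(x)⌉). -/
def phi (G : SimpleGraph V) (p : V → ℝ) : Set V :=
  {z | ∀ x : V, (G.dist x z : ℝ) ≤ (⌈p x⌉ : ℝ)}

/-- The values of `p` all lie in (1/2)ℕ. -/
def halfInt (p : V → ℝ) : Prop := ∀ x, ∃ k : ℕ, p x = (k : ℝ) / 2

end HellyPaper

namespace HellyPaper

section GraphAux
variable {G : SimpleGraph V}

lemma aut_dist (hconn : G.Connected) {e : Equiv.Perm V} (he : IsGraphAut G e) (x y : V) :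
    G.dist (e x) (e y) = G.dist x y := by
  have key : ∀ (f : Equiv.Perm V), IsGraphAut G f → ∀ x y : V,
      G.dist (f x) (f y) ≤ G.dist x y := by
    intro f hf x y
    obtain ⟨w, hw⟩ := hconn.exists_walk_length_eq_dist x y
    let hhom : G →g G := ⟨f, fun h => (hf _ _).mpr h⟩
    calc G.dist (f x) (f y) ≤ (w.map hhom).length := SimpleGraph.dist_le _
    _ = w.length := SimpleGraph.Walk.length_map hhom w
    _ = G.dist x y := hw
  have hinv : IsGraphAut G e⁻¹ := by
    intro a b
    have := he (e⁻¹ a) (e⁻¹ b)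
    simpa using this.symm
  have h1 := key e he x y
  have h2 := key e⁻¹ hinv (e x) (e y)
  simp only [Equiv.Perm.inv_def, Equiv.symm_apply_apply] at h2
  omega

lemma walk_split (hconn : G.Connected) {x y : V} (w : G.Walk x y) :
    ∀ r : ℕ, ∃ z, G.dist x z ≤ r ∧ G.dist z y ≤ w.length - r := by
  induction w with
  | @nil a =>
    intro r
    have hself : G.dist a a = 0 := SimpleGraph.dist_self
    exact ⟨a, by omega, by omega⟩
  | @cons a b d h p ih =>
    intro r
    cases r with
    | zero =>
      refine ⟨a, by simp, ?_⟩
      simpa using SimpleGraph.dist_le (SimpleGraph.Walk.cons h p)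
    | succ r' =>
      obtain ⟨z, h1, h2⟩ := ih r'
      refine ⟨z, ?_, ?_⟩
      · have tri := hconn.dist_triangle (u := a) (v := b) (w := z)
        have hb : G.dist a b ≤ 1 := by
          simpa using SimpleGraph.dist_le (SimpleGraph.Walk.cons h SimpleGraph.Walk.nil)
        omega
      · simpa [SimpleGraph.Walk.length_cons, Nat.succ_sub_succ] using h2

lemma balls_meet (hconn : G.Connected) {x y : V} {r s : ℕ} (hrs : G.dist x y ≤ r + s) :
    ∃ z, G.dist x z ≤ r ∧ G.dist y z ≤ s := by
  obtain ⟨w, hw⟩ := hconn.exists_walk_length_eq_dist x y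
  obtain ⟨z, h1, h2⟩ := walk_split hconn w r
  refine ⟨z, h1, ?_⟩
  rw [SimpleGraph.dist_comm]
  omega

end GraphAux

section Hull
variable {G : SimpleGraph V}

/-- A metric form on the graph. -/
def IsMetForm (G : SimpleGraph V) (q : V → ℝ) : Prop :=
  ∀ x y : V, (G.dist x y : ℝ) ≤ q x + q y

/-- The extremalization operator. -/
noncomputable def estar (G : SimpleGraph V) (q : V → ℝ) : V → ℝ :=
  fun z => ⨆ x : V, ((G.dist z x : ℝ) - q x)

variable [Nonempty V]

lemma IsMetForm.nonneg {q : V → ℝ} (hq : IsMetForm G q) (x : V) : 0 ≤ q x := by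
  have h := hq x x
  have : G.dist x x = 0 := SimpleGraph.dist_self
  rw [this] at h
  push_cast at h
  linarith

lemma IsMetForm.bdd {q : V → ℝ} (hq : IsMetForm G q) (z : V) :
    BddAbove (Set.range fun x => ((G.dist z x : ℝ) - q x)) := by
  refine ⟨q z, ?_⟩
  rintro _ ⟨x, rfl⟩
  have := hq z x
  simp only
  linarith

lemma estar_le_apply {q : V → ℝ} (hq : IsMetForm G q) (z : V) : estar G q z ≤ q z :=
  ciSup_le fun x => by have := hq z x; linarith

lemma le_estar_apply {q : V → ℝ} (hq : IsMetForm G q) (z x : V) :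
    (G.dist z x : ℝ) - q x ≤ estar G q z :=
  le_ciSup (hq.bdd z) x

lemma estar_anti {q q' : V → ℝ} (hq : IsMetForm G q) (h : ∀ x, q x ≤ q' x) (z : V) :
    estar G q' z ≤ estar G q z :=
  ciSup_le fun x => (sub_le_sub_left (h x) _).trans (le_estar_apply hq z x)

lemma estar_lip {q q' : V → ℝ} (hq : IsMetForm G q) (hq' : IsMetForm G q') {β : ℝ}
    (h : ∀ x, |q x - q' x| ≤ β) (z : V) : |estar G q z - estar G q' z| ≤ β := by
  have hA : estar G q z ≤ estar G q' z + β := by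
    apply ciSup_le
    intro x
    have h1 := (abs_le.mp (h x)).1
    have h2 := le_estar_apply hq' z x
    linarith
  have hB : estar G q' z ≤ estar G q z + β := by
    apply ciSup_le
    intro x
    have h1 := (abs_le.mp (h x)).2
    have h2 := le_estar_apply hq z x
    linarith
  rw [abs_le]
  exact ⟨by linarith, by linarith⟩

/-- One step of Lang's iteration. -/
noncomputable def tmap (G : SimpleGraph V) (q : V → ℝ) : V → ℝ :=
  fun x => (q x + estar G q x) / 2

lemma tmap_met {q : V → ℝ} (hq : IsMetForm G q) : IsMetForm G (tmap G q) := by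
  intro x y
  have h1 := le_estar_apply hq x y
  have h2 := le_estar_apply hq y x
  have hcomm : G.dist y x = G.dist x y := SimpleGraph.dist_comm
  rw [hcomm] at h2
  unfold tmap
  linarith

lemma tmap_le {q : V → ℝ} (hq : IsMetForm G q) (x : V) : tmap G q x ≤ q x := by
  have := estar_le_apply hq x
  unfold tmap
  linarith

lemma tmap_lip {q q' : V → ℝ} (hq : IsMetForm G q) (hq' : IsMetForm G q') {β : ℝ}
    (h : ∀ x, |q x - q' x| ≤ β) (x : V) : |tmap G q x - tmap G q' x| ≤ β := by
  have h1 := abs_le.mp (h x)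
  have h2 := abs_le.mp (estar_lip hq hq' h x)
  unfold tmap
  rw [abs_le]
  constructor
  · linarith [h1.1, h2.1]
  · linarith [h1.2, h2.2]

lemma met_comp {q : V → ℝ} (hq : IsMetForm G q) (π : Equiv.Perm V)
    (dp : ∀ x y, G.dist (π x) (π y) = G.dist x y) :
    IsMetForm G (fun x => q (π x)) := by
  intro x y
  have := hq (π x) (π y)
  rw [dp] at this
  exact this

lemma estar_equivar {q : V → ℝ} (π : Equiv.Perm V)
    (dp : ∀ x y, G.dist (π x) (π y) = G.dist x y) (z : V) :
    estar G (fun x => q (π x)) z = estar G q (π z) := by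
  unfold estar
  rw [iSup, iSup]
  congr 1
  ext r
  simp only [Set.mem_range]
  constructor
  · rintro ⟨x, rfl⟩
    exact ⟨π x, by simp only [dp]⟩
  · rintro ⟨x, rfl⟩
    refine ⟨π⁻¹ x, ?_⟩
    have hdd := dp z (π⁻¹ x)
    rw [Equiv.Perm.inv_def, Equiv.apply_symm_apply] at hdd
    simp only [Equiv.Perm.inv_def, Equiv.apply_symm_apply, hdd]

lemma tmap_equivar {q : V → ℝ} (π : Equiv.Perm V)
    (dp : ∀ x y, G.dist (π x) (π y) = G.dist x y) (x : V) :
    tmap G (fun y => q (π y)) x = tmap G q (π x) := by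
  unfold tmap
  rw [estar_equivar π dp]

/-- Lang's iteration. -/
noncomputable def hullSeq (G : SimpleGraph V) (q₀ : V → ℝ) : ℕ → V → ℝ :=
  fun t => (tmap G)^[t] q₀

/-- The extremal limit function. -/
noncomputable def hullLim (G : SimpleGraph V) (q₀ : V → ℝ) : V → ℝ :=
  fun x => ⨅ t : ℕ, hullSeq G q₀ t x

variable {q₀ : V → ℝ}

lemma hullSeq_succ (t : ℕ) : hullSeq G q₀ (t + 1) = tmap G (hullSeq G q₀ t) := by
  unfold hullSeq
  exact Function.iterate_succ_apply' (tmap G) t q₀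

lemma hullSeq_met (hq₀ : IsMetForm G q₀) (t : ℕ) : IsMetForm G (hullSeq G q₀ t) := by
  induction t with
  | zero => exact hq₀
  | succ t ih => rw [hullSeq_succ]; exact tmap_met ih

lemma hullSeq_anti (hq₀ : IsMetForm G q₀) {s t : ℕ} (hst : s ≤ t) (x : V) :
    hullSeq G q₀ t x ≤ hullSeq G q₀ s x := by
  induction t, hst using Nat.le_induction with
  | base => exact le_refl _
  | succ t hst ih =>
    have := tmap_le (hullSeq_met hq₀ t) x
    rw [← hullSeq_succ] at this
    exact this.trans ih

lemma hullSeq_bddBelow (hq₀ : IsMetForm G q₀) (x : V) :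
    BddBelow (Set.range fun t => hullSeq G q₀ t x) := by
  refine ⟨0, ?_⟩
  rintro _ ⟨t, rfl⟩
  exact (hullSeq_met hq₀ t).nonneg x

lemma hullLim_le (hq₀ : IsMetForm G q₀) (t : ℕ) (x : V) :
    hullLim G q₀ x ≤ hullSeq G q₀ t x :=
  ciInf_le (hullSeq_bddBelow hq₀ x) t

lemma hullLim_nonneg (hq₀ : IsMetForm G q₀) (x : V) : 0 ≤ hullLim G q₀ x :=
  le_ciInf fun t => (hullSeq_met hq₀ t).nonneg x

lemma hullLim_met (hq₀ : IsMetForm G q₀) : IsMetForm G (hullLim G q₀) := by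
  intro x y
  by_contra hlt
  push_neg at hlt
  have hε0 : 0 < ((G.dist x y : ℝ) - hullLim G q₀ x - hullLim G q₀ y) / 2 := by linarith
  obtain ⟨t1, h1⟩ : ∃ t, hullSeq G q₀ t x
      < hullLim G q₀ x + ((G.dist x y : ℝ) - hullLim G q₀ x - hullLim G q₀ y) / 2 := by
    apply exists_lt_of_ciInf_lt
    show hullLim G q₀ x < _
    linarith
  obtain ⟨t2, h2⟩ : ∃ t, hullSeq G q₀ t y
      < hullLim G q₀ y + ((G.dist x y : ℝ) - hullLim G q₀ x - hullLim G q₀ y) / 2 := by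
    apply exists_lt_of_ciInf_lt
    show hullLim G q₀ y < _
    linarith
  have ha := hullSeq_anti hq₀ (le_max_left t1 t2) x
  have hb := hullSeq_anti hq₀ (le_max_right t1 t2) y
  have hm := hullSeq_met hq₀ (max t1 t2) x y
  linarith

lemma hullLim_extremal (hq₀ : IsMetForm G q₀) (z : V) :
    estar G (hullLim G q₀) z = hullLim G q₀ z := by
  have hmet := hullLim_met hq₀
  refine le_antisymm (estar_le_apply hmet z) ?_
  by_contra hlt
  push_neg at hlt
  set Λ := hullLim G q₀ z - estar G (hullLim G q₀) z with hΛ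
  have hΛ0 : 0 < Λ := by simp only [hΛ]; linarith
  have key : ∀ t, hullSeq G q₀ (t + 1) z - hullLim G q₀ z + Λ
      ≤ (hullSeq G q₀ t z - hullLim G q₀ z + Λ) / 2 := by
    intro t
    have h1 : estar G (hullSeq G q₀ t) z ≤ estar G (hullLim G q₀) z :=
      estar_anti hmet (fun x => hullLim_le hq₀ t x) z
    have h2 : hullSeq G q₀ (t + 1) z = (hullSeq G q₀ t z + estar G (hullSeq G q₀ t) z) / 2 := by
      rw [hullSeq_succ]; rfl
    rw [h2]
    simp only [hΛ]
    linarith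
  have decay : ∀ t, hullSeq G q₀ t z - hullLim G q₀ z + Λ
      ≤ (hullSeq G q₀ 0 z - hullLim G q₀ z + Λ) / 2 ^ t := by
    intro t
    induction t with
    | zero => simp
    | succ t ih =>
      have h := key t
      have h2 : (hullSeq G q₀ t z - hullLim G q₀ z + Λ) / 2
          ≤ (hullSeq G q₀ 0 z - hullLim G q₀ z + Λ) / 2 ^ (t + 1) := by
        rw [pow_succ, ← div_div]
        linarith
      linarith
  obtain ⟨t, ht⟩ := pow_unbounded_of_one_lt
    ((hullSeq G q₀ 0 z - hullLim G q₀ z + Λ) / Λ) (one_lt_two (α := ℝ))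
  have h3 := decay t
  have h4 : hullSeq G q₀ 0 z - hullLim G q₀ z ≥ 0 := by
    have := hullLim_le hq₀ 0 z; linarith
  have h5 : (hullSeq G q₀ 0 z - hullLim G q₀ z + Λ) < Λ * 2 ^ t := by
    rw [div_lt_iff₀ hΛ0] at ht
    nlinarith [pow_pos (two_pos (α := ℝ)) t]
  have h6 : (hullSeq G q₀ 0 z - hullLim G q₀ z + Λ) / 2 ^ t < Λ := by
    rw [div_lt_iff₀ (pow_pos two_pos t)]
    linarith
  have h7 := hullLim_le hq₀ t z
  linarith

lemma hullLim_disp (hq₀ : IsMetForm G q₀) (π : Equiv.Perm V)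
    (dp : ∀ x y, G.dist (π x) (π y) = G.dist x y) {β : ℝ}
    (h0 : ∀ x, |q₀ x - q₀ (π x)| ≤ β) (x : V) :
    |hullLim G q₀ x - hullLim G q₀ (π x)| ≤ β := by
  have hq₀' : IsMetForm G (fun y => q₀ (π y)) := met_comp hq₀ π dp
  have hA : ∀ t, hullSeq G (fun y => q₀ (π y)) t = fun y => hullSeq G q₀ t (π y) := by
    intro t
    induction t with
    | zero => rfl
    | succ t ih =>
      funext y
      rw [hullSeq_succ (q₀ := fun z => q₀ (π z)) t, ih,
        hullSeq_succ (q₀ := q₀) t]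
      exact tmap_equivar π dp y
  have hB : ∀ t y, |hullSeq G q₀ t y - hullSeq G (fun z => q₀ (π z)) t y| ≤ β := by
    intro t
    induction t with
    | zero => exact h0
    | succ t ih =>
      intro y
      rw [hullSeq_succ, hullSeq_succ]
      exact tmap_lip (hullSeq_met hq₀ t) (hullSeq_met hq₀' t) ih y
  have hC : ∀ t y, |hullSeq G q₀ t y - hullSeq G q₀ t (π y)| ≤ β := by
    intro t y
    have hb := hB t y
    rw [hA t] at hb
    exact hb
  rw [abs_le]
  constructor
  · have hle : hullLim G q₀ (π x) - β ≤ hullLim G q₀ x := by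
      apply le_ciInf
      intro t
      have h1 : hullLim G q₀ (π x) ≤ hullSeq G q₀ t (π x) := hullLim_le hq₀ t (π x)
      have h2 := (abs_le.mp (hC t x)).1
      linarith
    linarith
  · have hle : hullLim G q₀ x - β ≤ hullLim G q₀ (π x) := by
      apply le_ciInf
      intro t
      have h1 : hullLim G q₀ x ≤ hullSeq G q₀ t x := hullLim_le hq₀ t x
      have h2 := (abs_le.mp (hC t x)).2
      linarith
    linarith

end Hull

section Engine
variable {Γ : Type*} [Group Γ]

lemma engine (G : SimpleGraph V) (N : ℕ) (hN : 1 ≤ N)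
    (hHelly : IsHellyGraph G) (hdim : DimAtMost G N)
    (φ : Γ →* Equiv.Perm V) (hφ : ∀ γ : Γ, IsGraphAut G (φ γ))
    (x₀ : V) (g : Γ) (n : ℕ) (hn : 1 ≤ n) (A : ℝ)
    (hA : (G.dist x₀ (φ (g ^ n) x₀) : ℝ) ≤ A)
    (hA1 : ((N : ℝ) + 1) * A / (n : ℝ) < 1)
    (hnotell : ∀ R : ℝ, ∃ k : ℤ, R < (G.dist x₀ (φ (g ^ k) x₀) : ℝ)) :
    False := by
  obtain ⟨hconn, hHelly2⟩ := hHelly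
  haveI : Nonempty V := hconn.nonempty
  have DP : ∀ (γ : Γ) (x y : V), G.dist (φ γ x) (φ γ y) = G.dist x y :=
    fun γ => aut_dist hconn (hφ γ)
  have hn0 : (0:ℝ) < (n:ℝ) := by exact_mod_cast hn
  have hA0 : (0:ℝ) ≤ A := le_trans (Nat.cast_nonneg _) hA
  set τ : ℝ := A / (n:ℝ) with hτdef
  have hτ0 : 0 ≤ τ := div_nonneg hA0 hn0.le
  set β : ℝ := ((N:ℝ) + 1) * τ with hβdef
  have hβ0 : 0 ≤ β := mul_nonneg (by positivity) hτ0
  have hβ1 : β < 1 := by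
    have hh : ((N:ℝ)+1) * (A / (n:ℝ)) = ((N:ℝ)+1) * A / (n:ℝ) := by ring
    rw [hβdef, hτdef, hh]
    exact hA1
  set c : ℝ := (1 + β) / 2 with hcdef
  have hc0 : 0 < c := by rw [hcdef]; linarith
  have hc2 : 2 * c = 1 + β := by rw [hcdef]; ring
  -- the permutations
  set π : ℕ → Equiv.Perm V := fun j => φ ((g ^ j)⁻¹) with hπdef
  have dpπ : ∀ j (x y : V), G.dist (π j x) (π j y) = G.dist x y := by
    intro j
    simp only [hπdef]
    exact DP ((g ^ j)⁻¹)
  have hπ0 : ∀ x : V, π 0 x = x := by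
    intro x
    simp [hπdef]
  have hπcomp : ∀ j k (x : V), π j (π k x) = π (k + j) x := by
    intro j k x
    simp only [hπdef]
    rw [← Equiv.Perm.mul_apply, ← map_mul]
    have hgrp : (g ^ j)⁻¹ * (g ^ k)⁻¹ = (g ^ (k + j))⁻¹ := by
      rw [pow_add, mul_inv_rev]
    rw [hgrp]
  have hπinv : ∀ j (x : V), φ (g ^ j) (π j x) = x := by
    intro j x
    simp only [hπdef]
    rw [← Equiv.Perm.mul_apply, ← map_mul]
    simp
  -- the averaged metric form
  set f : ℕ → V → ℝ := fun i x => (G.dist x (φ (g ^ i) x₀) : ℝ) with hfdef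
  set q₀ : V → ℝ := fun x => (∑ i ∈ Finset.range n, f i x) / (n:ℝ) with hq₀def
  have hq₀ : IsMetForm G q₀ := by
    intro x y
    simp only [hq₀def]
    rw [← add_div, le_div_iff₀ hn0]
    have hterm : ∀ i ∈ Finset.range n, (G.dist x y : ℝ) ≤ f i x + f i y := by
      intro i _
      have tri : G.dist x y ≤ G.dist x (φ (g^i) x₀) + G.dist (φ (g^i) x₀) y :=
        hconn.dist_triangle
      have hcomm : G.dist (φ (g^i) x₀) y = G.dist y (φ (g^i) x₀) := SimpleGraph.dist_comm
      rw [hcomm] at tri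
      simp only [hfdef]
      exact_mod_cast tri
    calc (G.dist x y : ℝ) * (n:ℝ) = ∑ _i ∈ Finset.range n, (G.dist x y : ℝ) := by
          rw [Finset.sum_const, Finset.card_range, nsmul_eq_mul]; ring
    _ ≤ ∑ i ∈ Finset.range n, (f i x + f i y) := Finset.sum_le_sum hterm
    _ = (∑ i ∈ Finset.range n, f i x) + ∑ i ∈ Finset.range n, f i y :=
        Finset.sum_add_distrib
  have hshift : ∀ j i (x : V), f i (π j x) = f (i + j) x := by
    intro j i x
    simp only [hfdef]
    have h0 := DP (g ^ j) (π j x) (φ (g ^ i) x₀)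
    have h1 : φ (g ^ j) (π j x) = x := hπinv j x
    have h2 : φ (g ^ j) (φ (g ^ i) x₀) = φ (g ^ (i + j)) x₀ := by
      rw [← Equiv.Perm.mul_apply, ← map_mul, ← pow_add, Nat.add_comm j i]
    rw [h1, h2] at h0
    exact_mod_cast congrArg (Nat.cast : ℕ → ℝ) h0.symm
  have hfb : ∀ i (x : V), |f (n + i) x - f i x| ≤ A := by
    intro i x
    have h2 : φ (g ^ (n + i)) x₀ = φ (g ^ i) (φ (g ^ n) x₀) := by
      rw [← Equiv.Perm.mul_apply, ← map_mul, ← pow_add, Nat.add_comm i n]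
    have hdd : (G.dist (φ (g ^ i) x₀) (φ (g ^ (n + i)) x₀) : ℝ) ≤ A := by
      rw [h2, DP (g ^ i)]
      exact hA
    have tri1 : G.dist x (φ (g^(n+i)) x₀)
        ≤ G.dist x (φ (g^i) x₀) + G.dist (φ (g^i) x₀) (φ (g^(n+i)) x₀) :=
      hconn.dist_triangle
    have tri2 : G.dist x (φ (g^i) x₀)
        ≤ G.dist x (φ (g^(n+i)) x₀) + G.dist (φ (g^(n+i)) x₀) (φ (g^i) x₀) :=
      hconn.dist_triangle
    have hcm : G.dist (φ (g^(n+i)) x₀) (φ (g^i) x₀)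
        = G.dist (φ (g^i) x₀) (φ (g^(n+i)) x₀) := SimpleGraph.dist_comm
    rw [hcm] at tri2
    have tri1' : (G.dist x (φ (g^(n+i)) x₀) : ℝ)
        ≤ (G.dist x (φ (g^i) x₀) : ℝ) + (G.dist (φ (g^i) x₀) (φ (g^(n+i)) x₀) : ℝ) := by
      exact_mod_cast tri1
    have tri2' : (G.dist x (φ (g^i) x₀) : ℝ)
        ≤ (G.dist x (φ (g^(n+i)) x₀) : ℝ) + (G.dist (φ (g^i) x₀) (φ (g^(n+i)) x₀) : ℝ) := by
      exact_mod_cast tri2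
    simp only [hfdef]
    rw [abs_le]
    constructor
    · linarith
    · linarith
  have htele : ∀ j (x : V),
      (∑ i ∈ Finset.range n, f (i + j) x) - ∑ i ∈ Finset.range n, f i x
      = ∑ i ∈ Finset.range j, (f (n + i) x - f i x) := by
    intro j x
    induction j with
    | zero => simp
    | succ j ih =>
      have h1 : ∑ i ∈ Finset.range n, f (i + (j+1)) x
          = ∑ i ∈ Finset.range n, f ((i+1) + j) x := by
        apply Finset.sum_congr rfl
        intro i _
        have hii : i + (j+1) = (i+1) + j := by omega
        rw [hii]
      have hstep : (∑ i ∈ Finset.range n, f (i + (j+1)) x)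
          - ∑ i ∈ Finset.range n, f (i + j) x = f (n + j) x - f j x := by
        rw [h1, ← Finset.sum_sub_distrib]
        have := Finset.sum_range_sub (fun i => f (i + j) x) n
        simpa using this
      rw [Finset.sum_range_succ]
      linarith
  have hq₀disp : ∀ j (x : V), |q₀ x - q₀ (π j x)| ≤ (j:ℝ) * τ := by
    intro j x
    have hval : q₀ (π j x) - q₀ x
        = (∑ i ∈ Finset.range j, (f (n + i) x - f i x)) / (n:ℝ) := by
      simp only [hq₀def]
      rw [div_sub_div_same]
      congr 1
      rw [Finset.sum_congr rfl (fun i _ => hshift j i x)]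
      exact htele j x
    have hsum : |∑ i ∈ Finset.range j, (f (n + i) x - f i x)| ≤ (j:ℝ) * A := by
      calc |∑ i ∈ Finset.range j, (f (n + i) x - f i x)|
          ≤ ∑ i ∈ Finset.range j, |f (n + i) x - f i x| :=
            Finset.abs_sum_le_sum_abs _ _
      _ ≤ ∑ _i ∈ Finset.range j, A := Finset.sum_le_sum (fun i _ => hfb i x)
      _ = (j:ℝ) * A := by rw [Finset.sum_const, Finset.card_range, nsmul_eq_mul]
    rw [abs_sub_comm, hval, abs_div, abs_of_pos hn0, hτdef, ← mul_div_assoc]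
    gcongr
  -- the extremal function
  set p : V → ℝ := hullLim G q₀ with hpdef
  have hpmet : IsMetForm G p := hullLim_met hq₀
  have hpext : ∀ z, estar G p z = p z := hullLim_extremal hq₀
  have hpnn : ∀ x, 0 ≤ p x := hullLim_nonneg hq₀
  have hpdisp : ∀ j (x : V), |p x - p (π j x)| ≤ (j:ℝ) * τ := by
    intro j x
    exact hullLim_disp hq₀ (π j) (dpπ j) (hq₀disp j) x
  have hpair : ∀ j l (y : V), j ≤ N + 1 → l ≤ N + 1 → |p (π j y) - p (π l y)| ≤ β := by
    have key : ∀ j l (y : V), j ≤ l → l ≤ N + 1 → |p (π j y) - p (π l y)| ≤ β := by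
      intro j l y hjl hl
      have hc1 : π l y = π (l - j) (π j y) := by
        rw [hπcomp (l - j) j y]
        have hll : j + (l - j) = l := by omega
        rw [hll]
      rw [hc1]
      have hd := hpdisp (l - j) (π j y)
      have hle : ((l - j : ℕ) : ℝ) * τ ≤ β := by
        rw [hβdef]
        apply mul_le_mul_of_nonneg_right _ hτ0
        have h1 : (l - j : ℕ) ≤ N + 1 := by omega
        have h2 : ((l - j : ℕ) : ℝ) ≤ ((N + 1 : ℕ) : ℝ) := by exact_mod_cast h1
        push_cast at h2
        linarith
      exact hd.trans hle
    intro j l y hj hl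
    rcases le_total j l with h | h
    · exact key j l y h hl
    · rw [abs_sub_comm]
      exact key l j y h hj
  -- the radii
  set R : ℕ → V → ℕ := fun j x => (⌊p (π j x) + c⌋).toNat with hRdef
  have hRcast : ∀ j x, ((R j x : ℕ) : ℝ) = ((⌊p (π j x) + c⌋ : ℤ) : ℝ) := by
    intro j x
    have h0 : (0:ℤ) ≤ ⌊p (π j x) + c⌋ := by
      apply Int.floor_nonneg.mpr
      have := hpnn (π j x)
      linarith
    simp only [hRdef]
    exact_mod_cast congrArg (Int.cast : ℤ → ℝ) (Int.toNat_of_nonneg h0)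
  have hRle : ∀ j x, ((R j x : ℕ) : ℝ) ≤ p (π j x) + c := by
    intro j x
    rw [hRcast]
    exact Int.floor_le _
  have hRgt : ∀ j x, p (π j x) + c - 1 < ((R j x : ℕ) : ℝ) := by
    intro j x
    rw [hRcast]
    exact Int.sub_one_lt_floor _
  -- the chain of round cliques
  set σ : ℕ → Set V := fun i => {z | ∀ j, j ≤ i → ∀ x, G.dist x z ≤ R j x} with hσdef
  set SS : ℕ → Set (V × ℕ) := fun i => {q | ∃ j ≤ i, ∃ x, q = (x, R j x)} with hSSdef
  have hσeq : ∀ i, σ i = ⋂ q ∈ SS i, ball G q.1 q.2 := by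
    intro i
    ext z
    simp only [hσdef, hSSdef, Set.mem_setOf_eq, Set.mem_iInter, ball]
    constructor
    · rintro h q ⟨j, hj, x, rfl⟩
      exact h j hj x
    · intro h j hj x
      exact h (x, R j x) ⟨j, hj, x, rfl⟩
  have hmem : ∀ i z, z ∈ σ i ↔ ∀ j, j ≤ i → ∀ x, G.dist x z ≤ R j x := by
    intro i z
    simp only [hσdef, Set.mem_setOf_eq]
  have hne : ∀ i, i ≤ N + 1 → (σ i).Nonempty := by
    intro i hi
    rw [hσeq]
    apply hHelly2
    rintro q hq q' hq'
    simp only [hSSdef, Set.mem_setOf_eq] at hq hq'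
    obtain ⟨j, hj, x, rfl⟩ := hq
    obtain ⟨l, hl, y, rfl⟩ := hq'
    have hd : G.dist x y ≤ R j x + R l y := by
      have h1 := hRgt j x
      have h2 := hRgt l y
      have h3 : (G.dist x y : ℝ) ≤ p (π j x) + p (π j y) := by
        have hh := hpmet (π j x) (π j y)
        rw [dpπ] at hh
        exact hh
      have h4 : p (π j y) - p (π l y) ≤ β :=
        (abs_le.mp (hpair j l y (le_trans hj hi) (le_trans hl hi))).2
      have h5 : (G.dist x y : ℝ) < ((R j x : ℕ):ℝ) + ((R l y : ℕ):ℝ) + 1 := by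
        linarith
      have h6 : G.dist x y < R j x + R l y + 1 := by exact_mod_cast h5
      omega
    obtain ⟨z, hz1, hz2⟩ := balls_meet hconn hd
    exact ⟨z, hz1, hz2⟩
  have hclq : ∀ i, G.IsClique (σ i) := by
    intro i z hz z' hz' hne'
    rw [hmem] at hz hz'
    have hpz' : p z' ≤ c := by
      rw [← hpext z']
      apply ciSup_le
      intro x
      have h1 : G.dist x z' ≤ R 0 x := hz' 0 (Nat.zero_le i) x
      have h2 : ((R 0 x : ℕ):ℝ) ≤ p (π 0 x) + c := hRle 0 x
      rw [hπ0 x] at h2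
      have hcm : G.dist z' x = G.dist x z' := SimpleGraph.dist_comm
      rw [hcm]
      have h1' : (G.dist x z' : ℝ) ≤ ((R 0 x : ℕ):ℝ) := by exact_mod_cast h1
      linarith
    have hd1 : G.dist z' z ≤ 1 := by
      have h1 : G.dist z' z ≤ R 0 z' := hz 0 (Nat.zero_le i) z'
      have h2 : ((R 0 z' : ℕ):ℝ) ≤ p (π 0 z') + c := hRle 0 z'
      rw [hπ0 z'] at h2
      have h4 : ((R 0 z' : ℕ):ℝ) < 2 := by linarith
      have h5 : R 0 z' < 2 := by exact_mod_cast h4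
      omega
    have hne0 : G.dist z z' ≠ 0 := fun h0 => hne' (hconn.dist_eq_zero_iff.mp h0)
    have hcm : G.dist z z' = G.dist z' z := SimpleGraph.dist_comm
    have hd2 : G.dist z z' = 1 := by omega
    exact SimpleGraph.dist_eq_one_iff_adj.mp hd2
  have hround : ∀ i, i ≤ N + 1 → IsRoundClique G (σ i) :=
    fun i hi => ⟨hne i hi, hclq i, ⟨SS i, hσeq i⟩⟩
  have hmono : ∀ i, σ (i+1) ⊆ σ i := by
    intro i z hz
    rw [hmem] at hz ⊢
    intro j hj x
    exact hz j (by omega) x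
  have hstep : ∀ i z, z ∈ σ (i+1) → φ (g⁻¹) z ∈ σ i := by
    intro i z hz
    rw [hmem] at hz ⊢
    intro j hj x
    have h1 : G.dist x (φ (g⁻¹) z) = G.dist (φ g x) z := by
      have hh := DP g x (φ (g⁻¹) z)
      have h2 : φ g (φ (g⁻¹) z) = z := by
        rw [← Equiv.Perm.mul_apply, ← map_mul]
        simp
      rw [h2] at hh
      exact hh.symm
    have h2 : G.dist (φ g x) z ≤ R (j+1) (φ g x) := hz (j+1) (by omega) (φ g x)
    have h3 : π (j+1) (φ g x) = π j x := by
      simp only [hπdef]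
      rw [← Equiv.Perm.mul_apply, ← map_mul]
      have hgrp : (g ^ (j+1))⁻¹ * g = (g ^ j)⁻¹ := by group
      rw [hgrp]
    have h4 : R (j+1) (φ g x) = R j x := by
      simp only [hRdef, h3]
    rw [h1]
    rw [h4] at h2
    exact h2
  by_cases hex : ∃ i, i ≤ N ∧ σ (i+1) = σ i
  · -- an invariant clique : g is elliptic, contradiction
    obtain ⟨i, hiN, heqσ⟩ := hex
    obtain ⟨z₀, hz₀⟩ := hne i (by omega)
    have horb : ∀ k : ℕ, φ ((g ^ k)⁻¹) z₀ ∈ σ i := by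
      intro k
      induction k with
      | zero => simpa using hz₀
      | succ k ih =>
        have h1 : φ ((g ^ (k+1))⁻¹) z₀ = φ (g⁻¹) (φ ((g ^ k)⁻¹) z₀) := by
          rw [← Equiv.Perm.mul_apply, ← map_mul]
          have hgrp : (g ^ (k+1))⁻¹ = g⁻¹ * (g ^ k)⁻¹ := by group
          rw [hgrp]
        rw [h1]
        apply hstep
        rw [heqσ]
        exact ih
    have hdz : ∀ k : ℕ, G.dist z₀ (φ ((g ^ k)⁻¹) z₀) ≤ 1 := by
      intro k
      by_cases hzz : z₀ = φ ((g ^ k)⁻¹) z₀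
      · rw [← hzz]
        have : G.dist z₀ z₀ = 0 := SimpleGraph.dist_self
        omega
      · have hadj := hclq i hz₀ (horb k) hzz
        exact le_of_eq (SimpleGraph.dist_eq_one_iff_adj.mpr hadj)
    have hzb : ∀ k : ℤ, G.dist z₀ (φ (g ^ k) z₀) ≤ 1 := by
      intro k
      rcases k with k' | k'
      · -- nonnegative
        show G.dist z₀ (φ (g ^ ((k' : ℕ) : ℤ)) z₀) ≤ 1
        rw [zpow_natCast]
        have hh := DP ((g ^ k')⁻¹) z₀ (φ (g ^ k') z₀)
        have h2 : φ ((g ^ k')⁻¹) (φ (g ^ k') z₀) = z₀ := by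
          rw [← Equiv.Perm.mul_apply, ← map_mul]
          simp
        rw [h2] at hh
        have hcm : G.dist (φ ((g ^ k')⁻¹) z₀) z₀ = G.dist z₀ (φ ((g ^ k')⁻¹) z₀) :=
          SimpleGraph.dist_comm
        rw [← hh, hcm]
        exact hdz k'
      · show G.dist z₀ (φ (g ^ (Int.negSucc k')) z₀) ≤ 1
        rw [zpow_negSucc]
        exact hdz (k' + 1)
    have hfinal : ∀ k : ℤ, (G.dist x₀ (φ (g ^ k) x₀) : ℝ) ≤ 2 * (G.dist x₀ z₀ : ℝ) + 1 := by
      intro k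
      have t1 : G.dist x₀ (φ (g^k) x₀)
          ≤ G.dist x₀ (φ (g^k) z₀) + G.dist (φ (g^k) z₀) (φ (g^k) x₀) := hconn.dist_triangle
      have t2 : G.dist x₀ (φ (g^k) z₀) ≤ G.dist x₀ z₀ + G.dist z₀ (φ (g^k) z₀) :=
        hconn.dist_triangle
      have t3 : G.dist (φ (g^k) z₀) (φ (g^k) x₀) = G.dist z₀ x₀ := DP _ _ _
      have t4 : G.dist z₀ x₀ = G.dist x₀ z₀ := SimpleGraph.dist_comm
      have t5 := hzb k
      have : G.dist x₀ (φ (g^k) x₀) ≤ 2 * G.dist x₀ z₀ + 1 := by omega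
      exact_mod_cast this
    obtain ⟨k, hk⟩ := hnotell (2 * (G.dist x₀ z₀ : ℝ) + 1)
    exact absurd hk (not_lt.mpr (hfinal k))
  · -- a strictly increasing chain of N+2 round cliques : contradiction with dimension
    push_neg at hex
    have hstrict : ∀ i, i ≤ N → σ (i+1) ⊂ σ i := by
      intro i hi
      exact (hmono i).ssubset_of_ne (hex i hi)
    have hchain : ∀ b a : ℕ, a < b → b ≤ N + 1 → σ b ⊂ σ a := by
      intro b
      induction b with
      | zero => omega
      | succ b ih =>
        intro a hab hbN
        rcases Nat.lt_or_ge a b with h | h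
        · exact (hstrict b (by omega)).trans (ih a h (by omega))
        · have haeq : a = b := by omega
          subst haeq
          exact hstrict a (by omega)
    have hsm : StrictMono (fun l : Fin (N+2) => σ (N + 1 - (l : ℕ))) := by
      intro a b hab
      have ha : (a : ℕ) < (b : ℕ) := hab
      have hb2 : (b : ℕ) < N + 2 := b.isLt
      exact hchain (N + 1 - (a : ℕ)) (N + 1 - (b : ℕ)) (by omega) (by omega)
    have hcontra := hdim (N+1) (fun l => σ (N + 1 - (l : ℕ)))
      (fun l => hround _ (by omega)) hsm
    omega

end Engine

section Word
variable {Γ : Type*} [Group Γ] {G : SimpleGraph V}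

lemma word_bound (hconn : G.Connected) (φ : Γ →* Equiv.Perm V)
    (hφ : ∀ γ : Γ, IsGraphAut G (φ γ)) (x₀ : V) (K : ℝ) :
    ∀ L : List Γ, (∀ s ∈ L, (G.dist x₀ (φ s x₀) : ℝ) ≤ K) →
      (G.dist x₀ (φ L.prod x₀) : ℝ) ≤ L.length * K := by
  intro L
  induction L with
  | nil =>
    intro _
    simp only [List.prod_nil, map_one, List.length_nil]
    have h1 : (1 : Equiv.Perm V) x₀ = x₀ := rfl
    rw [h1]
    have h2 : G.dist x₀ x₀ = 0 := SimpleGraph.dist_self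
    rw [h2]
    norm_num
  | cons s L ih =>
    intro hs
    have h1 : (G.dist x₀ (φ s x₀) : ℝ) ≤ K := hs s (List.mem_cons_self (a := s) (l := L))
    have h2 := ih (fun t ht => hs t (List.mem_cons_of_mem _ ht))
    have tri : G.dist x₀ (φ (s * L.prod) x₀)
        ≤ G.dist x₀ (φ s x₀) + G.dist (φ s x₀) (φ (s * L.prod) x₀) := hconn.dist_triangle
    have hmid : G.dist (φ s x₀) (φ (s * L.prod) x₀) = G.dist x₀ (φ L.prod x₀) := by
      have h3 : φ (s * L.prod) x₀ = φ s (φ L.prod x₀) := by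
        rw [map_mul]
        rfl
      rw [h3]
      exact aut_dist hconn (hφ s) x₀ (φ L.prod x₀)
    rw [hmid] at tri
    have tri' : (G.dist x₀ (φ (s * L.prod) x₀) : ℝ)
        ≤ (G.dist x₀ (φ s x₀) : ℝ) + (G.dist x₀ (φ L.prod x₀) : ℝ) := by exact_mod_cast tri
    rw [List.prod_cons, List.length_cons]
    push_cast
    linarith

end Word


/-- Uniform non-distortion: if a group Γ acts on a Helly graph of combinatorial
dimension at most N ≥ 1, every generator moves the basepoint at most K, and
g ∈ Γ is not elliptic, then any word in the generators representing gⁿ has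
length at least n/(2NK). -/
theorem stmt14 {V : Type*} {Γ : Type*} [Group Γ] (G : SimpleGraph V)
    (N : ℕ) (hN : 1 ≤ N)
    (hHelly : IsHellyGraph G) (hdim : DimAtMost G N)
    (φ : Γ →* Equiv.Perm V) (hφ : ∀ γ : Γ, IsGraphAut G (φ γ))
    (x₀ : V) (S : Finset Γ) (K : ℝ) (hK0 : 0 < K)
    (hK : ∀ s : Γ, (s ∈ S ∨ s⁻¹ ∈ S) → (G.dist x₀ (φ s x₀) : ℝ) ≤ K)
    (g : Γ)
    (hnotell : ∀ R : ℝ, ∃ n : ℤ, R < (G.dist x₀ (φ (g ^ n) x₀) : ℝ)) :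
    ∀ n : ℕ, 1 ≤ n → ∀ (m : ℕ) (w : Fin m → Γ),
      (∀ i, w i ∈ S ∨ (w i)⁻¹ ∈ S) → g ^ n = (List.ofFn w).prod →
      (n : ℝ) / (2 * N * K) ≤ (m : ℝ) := by
  intro n hn m w hw hprod
  by_contra hcon
  push_neg at hcon
  have hconn := hHelly.1
  have hn0 : (0:ℝ) < (n:ℝ) := by exact_mod_cast hn
  have hN1 : (1:ℝ) ≤ (N:ℝ) := by exact_mod_cast hN
  have h2NK : (0:ℝ) < 2 * (N:ℝ) * K := by positivity
  have hA : (G.dist x₀ (φ (g ^ n) x₀) : ℝ) ≤ (m:ℝ) * K := by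
    have hb := word_bound hconn φ hφ x₀ K (List.ofFn w) ?_
    · rw [← hprod] at hb
      simpa using hb
    · intro s hs
      obtain ⟨i, hi⟩ := Set.mem_range.mp ((List.mem_ofFn' w s).mp hs)
      subst hi
      exact hK (w i) (hw i)
  have hmK : (m:ℝ) * (2 * (N:ℝ) * K) < (n:ℝ) := (lt_div_iff₀ h2NK).mp hcon
  have hmK0 : (0:ℝ) ≤ (m:ℝ) * K := mul_nonneg (Nat.cast_nonneg _) hK0.le
  have hA1 : ((N:ℝ) + 1) * ((m:ℝ) * K) / (n:ℝ) < 1 := by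
    rw [div_lt_one hn0]
    have h1 : ((N:ℝ) + 1) * ((m:ℝ) * K) ≤ 2 * (N:ℝ) * ((m:ℝ) * K) := by
      apply mul_le_mul_of_nonneg_right _ hmK0
      linarith
    have h2 : 2 * (N:ℝ) * ((m:ℝ) * K) = (m:ℝ) * (2 * (N:ℝ) * K) := by ring
    linarith
  exact engine G N hN hHelly hdim φ hφ x₀ g n hn ((m:ℝ) * K) hA hA1 hnotell


end HellyPaper
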